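/- Let m ≡ n ≡ 0 (mod 3), u ≡ 2 or 4 (mod 6), v = 2m + 2n + u, c < binom(u,3), and suppose (u,c) satisfies condition (C2) with associated pair (λ,δ). Suppose that: (i) (V,𝒜) is a simple NGDD(2,3,v) of type 2^{(m,n)}u^1 with size-2 groups G_1,…,G_{m+n} and the group U of size u; (ii) (V,𝓑) is a simple GDD_{λ−1}(2,3,v) of type 1^{2m+2n}u^1 with long group U; (iii) (U,𝓒) is an NWBTS(u;c); and the block families 𝒜, 𝓑, 𝓒 are pairwise disjoint. Then 𝓕 = 𝒜 ∪ 𝓑 ∪ 𝓒 is the block set of an NWBTS(v;|𝓕|), where 3|𝓕| = λ·binom(v,2) + m − n + δ. -/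

import Mathlib

namespace DataPlacement

open Finset

variable {α : Type*} [DecidableEq α]

/-- Number of blocks of the family `F` (with multiplicity) containing `T`. -/
def lamF (F : Multiset (Finset α)) (T : Finset α) : ℕ :=
  Multiset.card (F.filter fun B => T ⊆ B)

/-- Triple system with `b` blocks on a point set `X` of size `v`. -/
def IsTSOn (X : Finset α) (v b : ℕ) (F : Multiset (Finset α)) : Prop :=
  X.card = v ∧ Multiset.card F = b ∧ ∀ B ∈ F, B.card = 3 ∧ B ⊆ X

/-- `(l, e)` is the pair associated with `(v, b)`:
`3b = l·v(v−1)/2 + e` with `−v/2 < e < v/2`. -/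
def AssocPair (v b l : ℕ) (e : ℤ) : Prop :=
  6 * (b : ℤ) = (l : ℤ) * v * ((v : ℤ) - 1) + 2 * e ∧
    -(v : ℤ) < 2 * e ∧ 2 * e < (v : ℤ)

/-- Condition (C1). -/
def CondC1 (v b : ℕ) : Prop :=
  v % 3 = 2 ∧ ∃ l : ℕ, 0 < l ∧
    ((v % 6 = 5 ∧ (l % 3 = 1 ∨ l % 3 = 2)) ∨
     (v % 6 = 2 ∧ (l % 6 = 2 ∨ l % 6 = 4))) ∧
    (b = l * v * (v - 1) / 6 ∨ b = (l * v * (v - 1) + 5) / 6)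

/-- Condition (C2). -/
def CondC2 (v b : ℕ) : Prop :=
  v % 2 = 0 ∧ ∃ l : ℕ, 0 < l ∧ l % 2 = 1 ∧
    (l : ℤ) * v * ((v : ℤ) - 1) - v < 6 * (b : ℤ) ∧
    6 * (b : ℤ) < (l : ℤ) * v * ((v : ℤ) - 1) + v

/-- Pairs of points of `X` whose block count equals `l + i`. -/
def Dlev (X : Finset α) (F : Multiset (Finset α)) (l : ℕ) (i : ℤ) :
    Finset (Finset α) :=
  (X.powersetCard 2).filter fun p => (lamF F p : ℤ) = (l : ℤ) + i

/-- Every pair of points of `X` lies in `l−1`, `l`, or `l+1` blocks. -/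
def PairRangeOn (X : Finset α) (F : Multiset (Finset α)) (l : ℕ) : Prop :=
  ∀ p ∈ X.powersetCard 2,
    (l : ℤ) - 1 ≤ (lamF F p : ℤ) ∧ (lamF F p : ℤ) ≤ (l : ℤ) + 1

def IsTriangle (D : Finset (Finset α)) : Prop :=
  ∃ x y z : α, x ≠ y ∧ x ≠ z ∧ y ≠ z ∧
    D = {({x, y} : Finset α), {y, z}, {x, z}}

def IsFourCycle (D : Finset (Finset α)) : Prop :=
  ∃ x y z w : α, x ≠ y ∧ x ≠ z ∧ x ≠ w ∧ y ≠ z ∧ y ≠ w ∧ z ≠ w ∧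
    D = {({x, y} : Finset α), {y, z}, {z, w}, {x, w}}

/-- `D` is a perfect matching on the point set `X`. -/
def IsPerfectMatchingOn (X : Finset α) (D : Finset (Finset α)) : Prop :=
  (∀ p ∈ D, p.card = 2 ∧ p ⊆ X) ∧ ∀ x ∈ X, ∃! p, p ∈ D ∧ x ∈ p

/-- Defect-graph shape required for nearly 2-balance under (C1). -/
def C1ShapeOn (X : Finset α) (F : Multiset (Finset α)) (l : ℕ) (e : ℤ) : Prop :=
  (e = 1 ∧ IsTriangle (Dlev X F l 1 ∪ Dlev X F l (-1)) ∧
     (Dlev X F l 1).card = 2 ∧ (Dlev X F l (-1)).card = 1) ∨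
  (e = -1 ∧ IsTriangle (Dlev X F l 1 ∪ Dlev X F l (-1)) ∧
     (Dlev X F l 1).card = 1 ∧ (Dlev X F l (-1)).card = 2) ∨
  (e = 2 ∧ IsFourCycle (Dlev X F l 1 ∪ Dlev X F l (-1)) ∧
     (Dlev X F l 1).card = 3 ∧ (Dlev X F l (-1)).card = 1) ∨
  (e = -2 ∧ IsFourCycle (Dlev X F l 1 ∪ Dlev X F l (-1)) ∧
     (Dlev X F l 1).card = 1 ∧ (Dlev X F l (-1)).card = 3)

/-- Defect-graph shape required for nearly 2-balance under (C2)
(here `v = X.card`). -/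
def C2ShapeOn (X : Finset α) (v : ℕ) (F : Multiset (Finset α)) (l : ℕ) (e : ℤ) : Prop :=
  (((v : ℤ) - 2 * e) % 4 = 0 ∧
    IsPerfectMatchingOn X (Dlev X F l 1 ∪ Dlev X F l (-1)) ∧
    4 * ((Dlev X F l 1).card : ℤ) = (v : ℤ) + 2 * e ∧
    4 * ((Dlev X F l (-1)).card : ℤ) = (v : ℤ) - 2 * e) ∨
  (((v : ℤ) - 2 * e) % 4 ≠ 0 ∧
    ∃ (c a₂ a₃ a₄ : α) (star : Finset (Finset α)),
      c ∈ X ∧ a₂ ∈ X ∧ a₃ ∈ X ∧ a₄ ∈ X ∧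
      c ≠ a₂ ∧ c ≠ a₃ ∧ c ≠ a₄ ∧ a₂ ≠ a₃ ∧ a₂ ≠ a₄ ∧ a₃ ≠ a₄ ∧
      star = {({c, a₂} : Finset α), {c, a₃}, {c, a₄}} ∧
      star ⊆ Dlev X F l 1 ∪ Dlev X F l (-1) ∧
      IsPerfectMatchingOn (X \ {c, a₂, a₃, a₄})
        ((Dlev X F l 1 ∪ Dlev X F l (-1)) \ star) ∧
      (((star ∩ Dlev X F l 1).card = 2 ∧ (star ∩ Dlev X F l (-1)).card = 1 ∧
          4 * (((Dlev X F l 1) \ star).card : ℤ) = (v : ℤ) - 6 + 2 * e ∧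
          4 * (((Dlev X F l (-1)) \ star).card : ℤ) = (v : ℤ) - 2 - 2 * e) ∨
        ((star ∩ Dlev X F l 1).card = 1 ∧ (star ∩ Dlev X F l (-1)).card = 2 ∧
          4 * (((Dlev X F l 1) \ star).card : ℤ) = (v : ℤ) - 2 + 2 * e ∧
          4 * (((Dlev X F l (-1)) \ star).card : ℤ) = (v : ℤ) - 6 - 2 * e)))

/-- `F` is 3-balanced on `X`: the multiplicities of any two triples of `X`
differ by at most one. -/
def ThreeBalancedOn (X : Finset α) (F : Multiset (Finset α)) : Prop :=
  ∀ T₁ ∈ X.powersetCard 3, ∀ T₂ ∈ X.powersetCard 3, F.count T₁ ≤ F.count T₂ + 1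

/-- Nearly well-balanced triple system NWBTS(v;b) on the point set `X`. -/
def IsNWBTSOn (X : Finset α) (v b : ℕ) (F : Multiset (Finset α)) : Prop :=
  IsTSOn X v b F ∧ ThreeBalancedOn X F ∧
  ∃ (l : ℕ) (e : ℤ), 0 < l ∧ AssocPair v b l e ∧ PairRangeOn X F l ∧
    ((CondC1 v b ∧ C1ShapeOn X F l e) ∨ (CondC2 v b ∧ C2ShapeOn X v F l e))

/-- `B` is an S_mu(2,3,·) design on the point set `X`. -/
def IsSDesignOn (X : Finset α) (mu : ℕ) (B : Multiset (Finset α)) : Prop :=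
  (∀ A ∈ B, A.card = 3 ∧ A ⊆ X) ∧ ∀ p ∈ X.powersetCard 2, lamF B p = mu

/-- `B` is a GDD_mu(2,3,·) of type `1^{·}u^1` on `X` with long group `U`. -/
def IsGDD1u (X : Finset α) (mu u : ℕ) (U : Finset α) (B : Multiset (Finset α)) : Prop :=
  U ⊆ X ∧ U.card = u ∧
  (∀ A ∈ B, A.card = 3 ∧ A ⊆ X ∧ (A ∩ U).card ≤ 1) ∧
  ∀ p ∈ X.powersetCard 2, ¬ p ⊆ U → lamF B p = mu

/-- `B` is a GDD_mu(2,3,·) with group family `G`. -/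
def IsGDDgroups (mu : ℕ) {n : ℕ} (G : Fin n → Finset α) (B : Multiset (Finset α)) : Prop :=
  (∀ A ∈ B, A.card = 3 ∧ A ⊆ Finset.univ.biUnion G ∧ ∀ i, (A ∩ G i).card ≤ 1) ∧
  ∀ x y : α, x ≠ y → (∃ i j, i ≠ j ∧ x ∈ G i ∧ y ∈ G j) → lamF B {x, y} = mu

/-- Nearly group divisible design NGDD(2,3,·) of type `2^{(m,n)}u^1` on `X`. -/
def IsNGDD (X : Finset α) (m n u : ℕ) (G : Fin (m + n) → Finset α) (U : Finset α)
    (B : Multiset (Finset α)) : Prop :=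
  (∀ i, (G i).card = 2 ∧ G i ⊆ X) ∧ U.card = u ∧ U ⊆ X ∧
  (∀ i j, i ≠ j → Disjoint (G i) (G j)) ∧ (∀ i, Disjoint (G i) U) ∧
  U ∪ Finset.univ.biUnion G = X ∧
  (∀ A ∈ B, A.card = 3 ∧ A ⊆ X) ∧
  (∀ i : Fin (m + n), (i : ℕ) < m → lamF B (G i) = 2) ∧
  (∀ i : Fin (m + n), m ≤ (i : ℕ) → lamF B (G i) = 0) ∧
  (∀ p ∈ U.powersetCard 2, lamF B p = 0) ∧
  (∀ p ∈ X.powersetCard 2, (∀ i, ¬ p ⊆ G i) → ¬ p ⊆ U → lamF B p = 1)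

/-- Candelabra system CS(g^n : s) on `X` with stem `S` and groups `G`. -/
def IsCS (X : Finset α) (g n s : ℕ) (S : Finset α) (G : Fin n → Finset α)
    (A : Multiset (Finset α)) : Prop :=
  S.card = s ∧ S ⊆ X ∧ (∀ i, (G i).card = g ∧ G i ⊆ X) ∧
  (∀ i j, i ≠ j → Disjoint (G i) (G j)) ∧ (∀ i, Disjoint (G i) S) ∧
  S ∪ Finset.univ.biUnion G = X ∧
  (∀ B ∈ A, B.card = 3 ∧ B ⊆ X) ∧
  (∀ T ∈ X.powersetCard 3, (∀ i, ¬ T ⊆ S ∪ G i) → lamF A T = 1) ∧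
  (∀ T ∈ X.powersetCard 3, (∃ i, T ⊆ S ∪ G i) → lamF A T = 0)

/-- Partitionable candelabra system PCS(g^n : s). -/
def IsPCS (X : Finset α) (g n s : ℕ) (S : Finset α) (G : Fin n → Finset α)
    (A : Multiset (Finset α)) : Prop :=
  IsCS X g n s S G A ∧
  ∃ (Ax : α → Multiset (Finset α)) (Ai : Fin (s - 2) → Multiset (Finset α)),
    A = (∑ p ∈ X \ S, Ax p) + ∑ i, Ai i ∧
    (∀ i : Fin n, ∀ p ∈ G i, IsGDD1u X 1 (g + s) (G i ∪ S) (Ax p)) ∧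
    (∀ j, IsGDDgroups 1 G (Ai j))

/-- g-PCS_2((2ag)^n : s). -/
def IsGPCS2 (X : Finset α) (a g n s : ℕ) (S : Finset α) (G : Fin n → Finset α)
    (A : Multiset (Finset α)) : Prop :=
  IsCS X (2 * a * g) n s S G A ∧
  ∃ (P : Fin (g * n) → Multiset (Finset α)) (grp : Fin (g * n) → Fin n),
    (∑ i, P i) ≤ A ∧
    (∀ j : Fin n, (Finset.univ.filter fun i => grp i = j).card = g) ∧
    (∀ i, IsGDD1u X 2 (2 * a * g + s) (G (grp i) ∪ S) (P i))

/-- g-PCS_2^r((2ag)^n : s). -/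
def IsGPCS2r (X : Finset α) (a g n s r : ℕ) (S : Finset α) (G : Fin n → Finset α)
    (A : Multiset (Finset α)) : Prop :=
  IsCS X (2 * a * g) n s S G A ∧
  ∃ (P : Fin (g * n) → Multiset (Finset α)) (grp : Fin (g * n) → Fin n),
    (∑ i, P i) ≤ A ∧
    (∀ j : Fin n, (Finset.univ.filter fun i => grp i = j).card = g) ∧
    (∀ i, IsGDD1u X 2 (2 * a * g + s) (G (grp i) ∪ S) (P i)) ∧
    ∃ (i : Fin (g * n)) (N : Multiset (Finset α))
      (Gs : Fin (r + (a * g * (n - 1) - r)) → Finset α),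
      N ≤ P i ∧ IsNGDD X r (a * g * (n - 1) - r) (2 * a * g + s) Gs (G (grp i) ∪ S) N

/-- GDD(3,3,·) of type `g^k` on `X` with groups `H`. -/
def IsGDD3On (X : Finset α) (g : ℕ) {k : ℕ} (H : Fin k → Finset α)
    (A : Multiset (Finset α)) : Prop :=
  (∀ i, (H i).card = g ∧ H i ⊆ X) ∧ (∀ i j, i ≠ j → Disjoint (H i) (H j)) ∧
  Finset.univ.biUnion H = X ∧
  (∀ B ∈ A, B.card = 3 ∧ B ⊆ X ∧ ∀ i, (B ∩ H i).card ≤ 1) ∧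
  (∀ T ∈ X.powersetCard 3, (∀ i, (T ∩ H i).card ≤ 1) → lamF A T = 1)

/-- `B` is a GDD_mu(2,3,·) on the points not in the omitted group `H o`,
with group set `{H i : i ≠ o}`. -/
def IsGDDOmit (mu : ℕ) {k : ℕ} (H : Fin k → Finset α) (o : Fin k)
    (B : Multiset (Finset α)) : Prop :=
  (∀ A ∈ B, A.card = 3 ∧ Disjoint A (H o) ∧ ∀ i, (A ∩ H i).card ≤ 1) ∧
  ∀ x y : α, x ≠ y →
    (∃ i j, i ≠ j ∧ i ≠ o ∧ j ≠ o ∧ x ∈ H i ∧ y ∈ H j) → lamF B {x, y} = mu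

/-- PGDD_2((2g)^{n+1}). -/
def IsPGDD2 (g n : ℕ) (H : Fin (n + 1) → Finset (Fin (2 * g * (n + 1))))
    (A : Multiset (Finset (Fin (2 * g * (n + 1))))) : Prop :=
  IsGDD3On Finset.univ (2 * g) H A ∧
  ∃ (i0 : Fin (n + 1))
    (P : Fin (g * n + 2 * g) → Multiset (Finset (Fin (2 * g * (n + 1)))))
    (f : Fin (g * n + 2 * g) → Fin (n + 1)),
    A = ∑ i, P i ∧
    (∀ j, j ≠ i0 → (Finset.univ.filter fun i => f i = j).card = g) ∧
    (∀ i, f i ≠ i0 → IsGDDOmit 2 H (f i) (P i)) ∧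
    (∀ i, f i = i0 → IsGDDOmit 1 H i0 (P i))

/-- 1-FG(3,(K1,KT),n) of type 1^n. -/
def Is1FG (n : ℕ) (K1 KT : Set ℕ) (A1 AT : Multiset (Finset (Fin n))) : Prop :=
  (∀ B ∈ A1, B.card ∈ K1) ∧ (∀ B ∈ AT, B.card ∈ KT) ∧
  (∀ p ∈ (Finset.univ : Finset (Fin n)).powersetCard 2, lamF A1 p = 1) ∧
  (∀ T ∈ (Finset.univ : Finset (Fin n)).powersetCard 3, lamF (A1 + AT) T = 1)

/-- PICS_2^r((2g)^3 : 0). -/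
def IsPICS2 (g r : ℕ) (G : Fin 3 → Finset (Fin (6 * g)))
    (A : Multiset (Finset (Fin (6 * g)))) : Prop :=
  IsCS Finset.univ (2 * g) 3 0 (∅ : Finset (Fin (6 * g))) G A ∧
  ∃ P : Fin (4 * g - 2) → Multiset (Finset (Fin (6 * g))),
    A = ∑ i, P i ∧
    (∀ i : Fin (4 * g - 2), (i : ℕ) < 2 * g → IsSDesignOn Finset.univ 2 (P i)) ∧
    (∃ i : Fin (4 * g - 2), (i : ℕ) < 2 * g ∧
      ∃ (N : Multiset (Finset (Fin (6 * g))))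
        (Gs : Fin (r + (3 * g - r)) → Finset (Fin (6 * g))),
        N ≤ P i ∧ IsNGDD Finset.univ r (3 * g - r) 0 Gs ∅ N) ∧
    (∀ i : Fin (4 * g - 2), 2 * g ≤ (i : ℕ) → IsGDDgroups 1 G (P i))

/-- Number of ordered pairs of blocks of `F` whose intersection has exactly
`j` points. -/
def interCount (F : Multiset (Finset α)) (j : ℕ) : ℕ :=
  Multiset.card
    ((F.bind fun A => F.map fun B => (A, B)).filter fun p => (p.1 ∩ p.2).card = j)

/-- The polynomial `P(F, x) = Σ_{j=0}^{3} v_j x^j`. -/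
noncomputable def Pval (F : Multiset (Finset α)) (x : ℝ) : ℝ :=
  ∑ j ∈ Finset.range 4, (interCount F j : ℝ) * x ^ j

/-- Optimal data placement for triple replication. -/
def IsOptimalDP (v b : ℕ) (F : Multiset (Finset (Fin v))) : Prop :=
  IsTSOn Finset.univ v b F ∧
  ∀ F' : Multiset (Finset (Fin v)), IsTSOn Finset.univ v b F' →
    ∀ x : ℝ, 1 ≤ x → Pval F x ≤ Pval F' x


lemma lamF_add' (F G : Multiset (Finset α)) (p : Finset α) :
    lamF (F + G) p = lamF F p + lamF G p := by
  simp [lamF, Multiset.filter_add]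

lemma lamF_eq_zero' (F : Multiset (Finset α)) (p : Finset α)
    (h : ∀ B ∈ F, ¬ p ⊆ B) : lamF F p = 0 := by
  simp only [lamF, Multiset.card_eq_zero]
  exact Multiset.filter_eq_nil.mpr h

lemma lamF_cons' (B : Finset α) (F : Multiset (Finset α)) (p : Finset α) :
    lamF (B ::ₘ F) p = (if p ⊆ B then 1 else 0) + lamF F p := by
  simp only [lamF, Multiset.filter_cons, Multiset.card_add]
  split <;> simp

lemma sum_lamF (X : Finset α) (F : Multiset (Finset α))
    (h : ∀ B ∈ F, B.card = 3 ∧ B ⊆ X) :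
    ∑ p ∈ X.powersetCard 2, lamF F p = 3 * Multiset.card F := by
  induction F using Multiset.induction with
  | empty => simp [lamF]
  | cons B F ih =>
    have hB := h B (Multiset.mem_cons_self B F)
    have hF : ∀ A ∈ F, A.card = 3 ∧ A ⊆ X := fun A hA => h A (Multiset.mem_cons_of_mem hA)
    have hflt : (X.powersetCard 2).filter (fun p => p ⊆ B) = B.powersetCard 2 := by
      ext p
      simp only [mem_filter, mem_powersetCard]
      exact ⟨fun ⟨⟨_, h2⟩, hpB⟩ => ⟨hpB, h2⟩, fun ⟨hpB, h2⟩ => ⟨⟨hpB.trans hB.2, h2⟩, hpB⟩⟩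
    have hcard : ((X.powersetCard 2).filter (fun p => p ⊆ B)).card = 3 := by
      rw [hflt, card_powersetCard, hB.1]; rfl
    calc ∑ p ∈ X.powersetCard 2, lamF (B ::ₘ F) p
        = ∑ p ∈ X.powersetCard 2, ((if p ⊆ B then 1 else 0) + lamF F p) := by
          simp [lamF_cons']
      _ = ((X.powersetCard 2).filter (fun p => p ⊆ B)).card + 3 * Multiset.card F := by
          rw [Finset.sum_add_distrib, ih hF, Finset.sum_boole]
          simp
      _ = 3 * Multiset.card (B ::ₘ F) := by rw [hcard]; simp; ring

lemma two_mul_choose_two (k : ℕ) : 2 * k.choose 2 = k * (k - 1) := by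
  rcases k with _ | j
  · simp
  · have h2 : 2 ∣ (j + 1) * j := by rw [mul_comm]; exact (Nat.even_mul_succ_self j).two_dvd
    simp only [Nat.add_sub_cancel, Nat.choose_two_right]
    rw [Nat.mul_div_cancel' h2]

lemma assoc_unique {u c : ℕ} (hu : 3 ≤ u) {l₁ l₂ : ℕ} {d₁ d₂ : ℤ}
    (h1 : AssocPair u c l₁ d₁) (h2 : AssocPair u c l₂ d₂) : l₁ = l₂ ∧ d₁ = d₂ := by
  obtain ⟨e1, e2, e3⟩ := h1; obtain ⟨f1, f2, f3⟩ := h2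
  have hu' : (3 : ℤ) ≤ u := by exact_mod_cast hu
  have key : ((l₁ : ℤ) - l₂) * (u * (u - 1)) = 2 * d₂ - 2 * d₁ := by linear_combination f1 - e1
  have h3 : (0:ℤ) ≤ (u:ℤ) * (u - 3) := mul_nonneg (by omega) (by omega)
  have h4 : (u:ℤ) * (u - 1) = u * (u - 3) + 2 * u := by ring
  have hl : (l₁ : ℤ) = l₂ := by
    rcases lt_trichotomy ((l₁ : ℤ)) ((l₂ : ℤ)) with h | h | h
    · exfalso
      have h1' : (1:ℤ) ≤ (l₂:ℤ) - l₁ := by omega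
      have h2' : (u:ℤ) * (u-1) ≤ ((l₂:ℤ) - l₁) * ((u:ℤ) * (u-1)) := by nlinarith
      nlinarith [key, h2', h3, h4, e3, f2]
    · exact h
    · exfalso
      have h1' : (1:ℤ) ≤ (l₁:ℤ) - l₂ := by omega
      have h2' : (u:ℤ) * (u-1) ≤ ((l₁:ℤ) - l₂) * ((u:ℤ) * (u-1)) := by nlinarith
      nlinarith [key, h2', h3, h4, e2, f3]
  have hln : l₁ = l₂ := by exact_mod_cast hl
  subst hln
  refine ⟨rfl, ?_⟩
  have : 2 * d₁ = 2 * d₂ := by linarith [e1, f1]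
  omega

set_option maxHeartbeats 2000000 in
/-- filling an NGDD and a GDD with an NWBTS (Lemma tee11). -/
theorem stmt_10 (v m n u c l : ℕ) (d : ℤ)
    (hm : m % 3 = 0) (hn : n % 3 = 0) (hu : u % 6 = 2 ∨ u % 6 = 4)
    (hv : v = 2 * m + 2 * n + u)
    (hc : c < u.choose 3) (hC2 : CondC2 u c) (hassoc : AssocPair u c l d)
    (U : Finset (Fin v)) (G : Fin (m + n) → Finset (Fin v))
    (A B C : Multiset (Finset (Fin v)))
    (hAsimple : A.Nodup) (hA : IsNGDD Finset.univ m n u G U A)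
    (hBsimple : B.Nodup) (hB : IsGDD1u Finset.univ (l - 1) u U B)
    (hC : IsNWBTSOn U u c C)
    (hAB : Disjoint A B) (hAC : Disjoint A C)
    (hBC : Disjoint B C) :
    IsNWBTSOn Finset.univ v (Multiset.card (A + B + C)) (A + B + C) ∧
    3 * (Multiset.card (A + B + C) : ℤ) =
      (l : ℤ) * (v.choose 2 : ℤ) + m - n + d := by
  classical
  obtain ⟨hGcard, hUcard, hUsub, hGdisj, hGUdisj, hcover, hAblocks, hAG1, hAG2, hAU, hAcross⟩ := hA
  obtain ⟨hUsub', hUcard', hBblocks, hBcross⟩ := hB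
  obtain ⟨hCTS, hC3bal, lC, eC, hlCpos, hassocC, hCrange, hCshape⟩ := hC
  obtain ⟨hUcardu, hCcard, hCblocks⟩ := hCTS
  set F : Multiset (Finset (Fin v)) := A + B + C with hF
  -- basic numeric facts
  have hu3 : 3 ≤ u := by
    by_contra h
    push_neg at h
    rw [Nat.choose_eq_zero_of_lt h] at hc
    omega
  -- l is odd and positive
  obtain ⟨hueven, l₀, hl₀pos, hl₀odd, hb1, hb2⟩ := hC2
  have hu2 : u % 2 = 0 := hueven
  have hl₀assoc : ∃ d₀ : ℤ, AssocPair u c l₀ d₀ := by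
    obtain ⟨k, hk⟩ : ∃ k : ℤ, (u : ℤ) = 2 * k := ⟨(u : ℤ) / 2, by omega⟩
    have key : 2 * (3 * (c : ℤ) - (l₀ : ℤ) * k * ((u : ℤ) - 1)) =
        6 * (c : ℤ) - (l₀ : ℤ) * u * ((u : ℤ) - 1) := by rw [hk]; ring
    exact ⟨3 * (c : ℤ) - (l₀ : ℤ) * k * ((u : ℤ) - 1),
      by linarith [key], by linarith [key, hb1], by linarith [key, hb2]⟩
  obtain ⟨d₀, hassoc₀⟩ := hl₀assoc
  obtain ⟨hleq, -⟩ := assoc_unique hu3 hassoc hassoc₀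
  have hlodd : l % 2 = 1 := by rw [hleq]; exact hl₀odd
  have hlpos : 0 < l := by rw [hleq]; exact hl₀pos
  have hl1 : 1 ≤ l := hlpos
  obtain ⟨hlCeq, heCeq⟩ := assoc_unique hu3 hassocC hassoc
  rw [hlCeq] at hlCpos hassocC hCrange hCshape
  rw [heCeq] at hassocC hCshape
  -- the NWBTS on U must be in the (C2) case
  have hCshape2 : C2ShapeOn U u C l d := by
    rcases hCshape with ⟨hc1, -⟩ | ⟨-, hs⟩
    · exfalso
      obtain ⟨hu32, l'', hl''pos, hlcase, hbv⟩ := hc1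
      rcases hu with hu6 | hu6
      swap
      · omega
      have hu8 : 8 ≤ u := by omega
      have hl''6 : l'' % 6 = 2 ∨ l'' % 6 = 4 := by
        rcases hlcase with ⟨h5, -⟩ | ⟨-, h⟩
        · omega
        · exact h
      set x := l'' * u * (u - 1) with hx
      have hxb : (x : ℤ) - 5 ≤ 6 * (c : ℤ) ∧ 6 * (c : ℤ) ≤ (x : ℤ) + 5 := by
        rcases hbv with hbv | hbv
        · have h1 := Nat.div_add_mod x 6
          have h2 : x % 6 < 6 := Nat.mod_lt _ (by omega)
          have : 6 * c = x - x % 6 := by omega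
          constructor <;> [omega; omega]
        · have h1 := Nat.div_add_mod (x + 5) 6
          have h2 : (x + 5) % 6 < 6 := Nat.mod_lt _ (by omega)
          have : 6 * c = x + 5 - (x + 5) % 6 := by omega
          constructor <;> [omega; omega]
      have hxZ : (x : ℤ) = (l'' : ℤ) * u * ((u : ℤ) - 1) := by
        rw [hx]
        push_cast [Nat.cast_sub (by omega : 1 ≤ u)]
        ring
      obtain ⟨k, hk⟩ : ∃ k : ℤ, (u : ℤ) = 2 * k := ⟨(u : ℤ) / 2, by omega⟩
      have hu8' : (8 : ℤ) ≤ u := by exact_mod_cast hu8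
      have key2 : 2 * (3 * (c : ℤ) - (l'' : ℤ) * k * ((u : ℤ) - 1)) =
          6 * (c : ℤ) - (x : ℤ) := by rw [hxZ, hk]; ring
      have hassoc'' : AssocPair u c l'' (3 * (c : ℤ) - (l'' : ℤ) * k * ((u : ℤ) - 1)) := by
        refine ⟨by rw [hxZ] at key2; linarith [key2], ?_, ?_⟩
        · linarith [key2, hxb.1, hxb.2, hu8']
        · linarith [key2, hxb.1, hxb.2, hu8']
      obtain ⟨hll, -⟩ := assoc_unique hu3 hassoc hassoc''
      omega
    · exact hs
  -- block shape of F
  have hFblocks : ∀ Bk ∈ F, Bk.card = 3 ∧ Bk ⊆ (Finset.univ : Finset (Fin v)) := by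
    intro Bk hBk
    rw [hF] at hBk
    rcases Multiset.mem_add.mp hBk with h | h
    · rcases Multiset.mem_add.mp h with h | h
      · exact ⟨(hAblocks Bk h).1, Finset.subset_univ _⟩
      · exact ⟨(hBblocks Bk h).1, Finset.subset_univ _⟩
    · exact ⟨(hCblocks Bk h).1, Finset.subset_univ _⟩
  -- group facts
  have hG2 : ∀ i, (G i).card = 2 := fun i => (hGcard i).1
  have hGne : ∀ i, (G i).Nonempty := fun i => Finset.card_pos.mp (by rw [hG2 i]; omega)
  have hGnotU : ∀ i, ¬ G i ⊆ U := by
    intro i hsub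
    obtain ⟨a, ha⟩ := hGne i
    exact Finset.disjoint_left.mp (hGUdisj i) ha (hsub ha)
  have hGinj : Function.Injective G := by
    intro i j hij
    by_contra hne
    obtain ⟨a, ha⟩ := hGne i
    exact Finset.disjoint_left.mp (hGdisj i j hne) ha (hij ▸ ha)
  -- lamF component computations
  have hlamB_U : ∀ p : Finset (Fin v), p.card = 2 → p ⊆ U → lamF B p = 0 := by
    intro p h2 hpU
    apply lamF_eq_zero'
    intro Bk hBk hsub
    have h1 := (hBblocks Bk hBk).2.2
    have h3 := Finset.card_le_card (Finset.subset_inter hsub hpU)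
    omega
  have hlamC_nU : ∀ p : Finset (Fin v), ¬ p ⊆ U → lamF C p = 0 := by
    intro p hp
    apply lamF_eq_zero'
    intro Bk hBk hsub
    exact hp (hsub.trans (hCblocks Bk hBk).2)
  have hlamF_U : ∀ p : Finset (Fin v), p.card = 2 → p ⊆ U → lamF F p = lamF C p := by
    intro p h2 hpU
    rw [hF, lamF_add', lamF_add',
      hAU p (Finset.mem_powersetCard.mpr ⟨hpU, h2⟩), hlamB_U p h2 hpU]
    omega
  have hpG_eq : ∀ (p : Finset (Fin v)) i, p.card = 2 → (p ⊆ G i ↔ p = G i) := by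
    intro p i h2
    constructor
    · intro hsub
      exact Finset.eq_of_subset_of_card_le hsub (by rw [hG2 i, h2])
    · intro h
      rw [h]
  have hlamF_G : ∀ i : Fin (m + n), lamF F (G i) = (if (i : ℕ) < m then 2 else 0) + (l - 1) := by
    intro i
    have hBG : lamF B (G i) = l - 1 :=
      hBcross (G i) (Finset.mem_powersetCard.mpr ⟨Finset.subset_univ _, hG2 i⟩) (hGnotU i)
    have hCG : lamF C (G i) = 0 := hlamC_nU _ (hGnotU i)
    rw [hF, lamF_add', lamF_add', hBG, hCG]
    by_cases him : (i : ℕ) < m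
    · rw [if_pos him, hAG1 i him]
      omega
    · rw [if_neg him, hAG2 i (le_of_not_gt him)]
      omega
  have hlamF_cross : ∀ p : Finset (Fin v), p.card = 2 → ¬ p ⊆ U → (∀ i, ¬ p ⊆ G i) →
      lamF F p = l := by
    intro p h2 hpU hpG
    rw [hF, lamF_add', lamF_add',
      hAcross p (Finset.mem_powersetCard.mpr ⟨Finset.subset_univ _, h2⟩) hpG hpU,
      hBcross p (Finset.mem_powersetCard.mpr ⟨Finset.subset_univ _, h2⟩) hpU,
      hlamC_nU p hpU]
    omega
  -- the defect sets
  set SG1 : Finset (Finset (Fin v)) :=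
    (Finset.univ.filter fun i : Fin (m + n) => (i : ℕ) < m).image G with hSG1
  set SG2 : Finset (Finset (Fin v)) :=
    (Finset.univ.filter fun i : Fin (m + n) => ¬ (i : ℕ) < m).image G with hSG2
  set SG : Finset (Finset (Fin v)) := Finset.univ.image G with hSGdef
  have hSGsplit : SG = SG1 ∪ SG2 := by
    rw [hSG1, hSG2, ← Finset.image_union, Finset.filter_union_filter_not_eq]
  have hmemSG : ∀ p ∈ SG, ∃ i, p = G i := by
    intro p hp
    obtain ⟨i, -, hi⟩ := Finset.mem_image.mp hp
    exact ⟨i, hi.symm⟩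
  have hmemSG1 : ∀ p ∈ SG1, ∃ i : Fin (m+n), (i : ℕ) < m ∧ p = G i := by
    intro p hp
    obtain ⟨i, hi, hie⟩ := Finset.mem_image.mp hp
    exact ⟨i, (Finset.mem_filter.mp hi).2, hie.symm⟩
  have hmemSG2 : ∀ p ∈ SG2, ∃ i : Fin (m+n), ¬ (i : ℕ) < m ∧ p = G i := by
    intro p hp
    obtain ⟨i, hi, hie⟩ := Finset.mem_image.mp hp
    exact ⟨i, (Finset.mem_filter.mp hi).2, hie.symm⟩
  have hDgen : ∀ j : ℤ, j = 1 ∨ j = -1 →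
      Dlev Finset.univ F l j = Dlev U C l j ∪
        ((Finset.univ.filter fun i : Fin (m + n) =>
          ((if (i : ℕ) < m then 2 else 0) + (l - 1) : ℕ) = (l : ℤ) + j).image G) := by
    intro j hj
    ext p
    simp only [Dlev, Finset.mem_filter, Finset.mem_powersetCard, Finset.mem_union,
      Finset.mem_image, Finset.mem_univ, true_and]
    constructor
    · rintro ⟨⟨-, h2⟩, hval⟩
      by_cases hpU : p ⊆ U
      · left
        rw [hlamF_U p h2 hpU] at hval
        exact ⟨⟨hpU, h2⟩, hval⟩
      · right
        by_cases hpG : ∃ i, p ⊆ G i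
        · obtain ⟨i, hi⟩ := hpG
          have hpe : p = G i := (hpG_eq p i h2).mp hi
          refine ⟨i, ?_, hpe.symm⟩
          rw [hpe, hlamF_G i] at hval
          exact hval
        · push_neg at hpG
          exfalso
          rw [hlamF_cross p h2 hpU hpG] at hval
          rcases hj with rfl | rfl <;> omega
    · rintro (⟨⟨hpU, h2⟩, hval⟩ | ⟨i, hiv, rfl⟩)
      · exact ⟨⟨Finset.subset_univ _, h2⟩, by rwa [hlamF_U p h2 hpU]⟩
      · exact ⟨⟨Finset.subset_univ _, hG2 i⟩, by rw [hlamF_G i]; exact hiv⟩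
  have hD1 : Dlev Finset.univ F l 1 = Dlev U C l 1 ∪ SG1 := by
    rw [hDgen 1 (Or.inl rfl), hSG1]
    congr 2
    ext i
    simp only [Finset.mem_filter, Finset.mem_univ, true_and]
    constructor
    · intro h
      by_contra him
      rw [if_neg him] at h
      omega
    · intro him
      rw [if_pos him]
      omega
  have hDm1 : Dlev Finset.univ F l (-1) = Dlev U C l (-1) ∪ SG2 := by
    rw [hDgen (-1) (Or.inr rfl), hSG2]
    congr 2
    ext i
    simp only [Finset.mem_filter, Finset.mem_univ, true_and]
    constructor
    · intro h
      by_contra him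
      rw [if_pos (by omega : (i : ℕ) < m)] at h
      omega
    · intro him
      rw [if_neg him]
      omega
  -- membership facts for Dlev of C
  have hDCmem : ∀ (j : ℤ) (p : Finset (Fin v)), p ∈ Dlev U C l j → p ⊆ U ∧ p.card = 2 := by
    intro j p hp
    exact Finset.mem_powersetCard.mp (Finset.mem_filter.mp hp).1
  have hdisjDS : ∀ (D S : Finset (Finset (Fin v))), (∀ p ∈ D, p ⊆ U) →
      (∀ p ∈ S, ∃ i, p = G i) → Disjoint D S := by
    intro D S hD hS
    rw [Finset.disjoint_left]
    rintro p hp hpS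
    obtain ⟨i, rfl⟩ := hS p hpS
    exact hGnotU i (hD _ hp)
  -- cardinalities of the group-pair families
  have hfiltm : (Finset.univ.filter fun i : Fin (m + n) => (i : ℕ) < m).card = m := by
    have he : (Finset.univ.filter fun i : Fin (m + n) => (i : ℕ) < m) =
        Finset.univ.map ⟨fun j : Fin m => (⟨(j : ℕ), by omega⟩ : Fin (m + n)),
          fun a b h => by simpa [Fin.ext_iff] using congrArg Fin.val h⟩ := by
      ext i
      rw [Finset.mem_filter, Finset.mem_map]
      constructor
      · rintro ⟨-, h⟩
        exact ⟨⟨(i : ℕ), h⟩, Finset.mem_univ _, Fin.ext rfl⟩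
      · rintro ⟨j, -, rfl⟩
        exact ⟨Finset.mem_univ _, j.isLt⟩
    rw [he, Finset.card_map, Finset.card_univ, Fintype.card_fin]
  have hfiltn : (Finset.univ.filter fun i : Fin (m + n) => ¬ (i : ℕ) < m).card = n := by
    have := Finset.card_filter_add_card_filter_not
      (s := (Finset.univ : Finset (Fin (m + n)))) (p := fun i => (i : ℕ) < m)
    rw [Finset.card_univ, Fintype.card_fin] at this
    omega
  have hSG1card : SG1.card = m := by
    rw [hSG1, Finset.card_image_of_injective _ hGinj, hfiltm]
  have hSG2card : SG2.card = n := by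
    rw [hSG2, Finset.card_image_of_injective _ hGinj, hfiltn]
  have hdisj1 : Disjoint (Dlev U C l 1) SG1 :=
    hdisjDS _ _ (fun p hp => (hDCmem 1 p hp).1)
      (fun p hp => by obtain ⟨i, -, hi⟩ := hmemSG1 p hp; exact ⟨i, hi⟩)
  have hdisjm1 : Disjoint (Dlev U C l (-1)) SG2 :=
    hdisjDS _ _ (fun p hp => (hDCmem (-1) p hp).1)
      (fun p hp => by obtain ⟨i, -, hi⟩ := hmemSG2 p hp; exact ⟨i, hi⟩)
  have hcD1 : (Dlev Finset.univ F l 1).card = (Dlev U C l 1).card + m := by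
    rw [hD1, Finset.card_union_of_disjoint hdisj1, hSG1card]
  have hcDm1 : (Dlev Finset.univ F l (-1)).card = (Dlev U C l (-1)).card + n := by
    rw [hDm1, Finset.card_union_of_disjoint hdisjm1, hSG2card]
  -- transfer of Dlev membership for pairs inside U
  have hDiff : ∀ (j : ℤ) (p : Finset (Fin v)), p ⊆ U → p.card = 2 →
      (p ∈ Dlev Finset.univ F l j ↔ p ∈ Dlev U C l j) := by
    intro j p hpU h2
    simp only [Dlev, Finset.mem_filter, Finset.mem_powersetCard]
    rw [hlamF_U p h2 hpU]
    exact ⟨fun h => ⟨⟨hpU, h2⟩, h.2⟩, fun h => ⟨⟨Finset.subset_univ _, h2⟩, h.2⟩⟩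
  -- extension of a perfect matching on U-minus-something by the groups
  have hmatch : ∀ (S : Finset (Fin v)) (M : Finset (Finset (Fin v))), S ⊆ U →
      IsPerfectMatchingOn (U \ S) M →
      IsPerfectMatchingOn ((Finset.univ : Finset (Fin v)) \ S) (M ∪ SG) := by
    intro S M hSU hPM
    have hGS : ∀ i, G i ⊆ Finset.univ \ S := by
      intro i x hx
      rw [Finset.mem_sdiff]
      exact ⟨Finset.mem_univ _, fun hxS => Finset.disjoint_left.mp (hGUdisj i) hx (hSU hxS)⟩
    constructor
    · intro p hp
      rcases Finset.mem_union.mp hp with h | h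
      · refine ⟨(hPM.1 p h).1, (hPM.1 p h).2.trans ?_⟩
        intro x hx
        rw [Finset.mem_sdiff] at hx ⊢
        exact ⟨Finset.mem_univ _, hx.2⟩
      · obtain ⟨i, rfl⟩ := hmemSG p h
        exact ⟨hG2 i, hGS i⟩
    · intro x hx
      rw [Finset.mem_sdiff] at hx
      by_cases hxU : x ∈ U
      · obtain ⟨p, ⟨hpM, hxp⟩, huniq⟩ := hPM.2 x (Finset.mem_sdiff.mpr ⟨hxU, hx.2⟩)
        refine ⟨p, ⟨Finset.mem_union_left _ hpM, hxp⟩, ?_⟩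
        rintro q ⟨hq, hxq⟩
        rcases Finset.mem_union.mp hq with h | h
        · exact huniq q ⟨h, hxq⟩
        · obtain ⟨i, rfl⟩ := hmemSG q h
          exact absurd hxU (Finset.disjoint_left.mp (hGUdisj i) hxq)
      · have hxG : ∃ i, x ∈ G i := by
          have hx2 : x ∈ U ∪ Finset.univ.biUnion G := by
            rw [hcover]; exact Finset.mem_univ x
          rcases Finset.mem_union.mp hx2 with h | h
          · exact absurd h hxU
          · simpa using Finset.mem_biUnion.mp h
        obtain ⟨i, hxi⟩ := hxG
        refine ⟨G i, ⟨Finset.mem_union_right _ (Finset.mem_image_of_mem G (Finset.mem_univ i)), hxi⟩, ?_⟩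
        rintro q ⟨hq, hxq⟩
        rcases Finset.mem_union.mp hq with h | h
        · exact absurd (Finset.mem_sdiff.mp ((hPM.1 q h).2 hxq)).1 hxU
        · obtain ⟨j, rfl⟩ := hmemSG q h
          have hji : j = i := by
            by_contra hne
            exact Finset.disjoint_left.mp (hGdisj j i hne) hxq hxi
          rw [hji]
  -- 3-balance
  have hT0 : ∃ T₀ ∈ U.powersetCard 3, C.count T₀ = 0 := by
    by_contra h
    push_neg at h
    have hle : (U.powersetCard 3).val ≤ C := by
      rw [Multiset.le_iff_count]
      intro T
      by_cases hT : T ∈ U.powersetCard 3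
      · have h1 := h T hT
        have h2 : (U.powersetCard 3).val.count T = 1 :=
          Multiset.count_eq_one_of_mem (U.powersetCard 3).nodup hT
        omega
      · rw [Multiset.count_eq_zero_of_notMem (fun hc => hT hc)]
        omega
    have := Multiset.card_le_card hle
    rw [hCcard] at this
    have h3 : Multiset.card (U.powersetCard 3).val = u.choose 3 := by
      show (U.powersetCard 3).card = u.choose 3
      rw [Finset.card_powersetCard, hUcardu]
    omega
  have hCcount : ∀ T, C.count T ≤ 1 := by
    intro T
    by_cases hT : T ∈ C
    · have hT3 : T ∈ U.powersetCard 3 :=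
        Finset.mem_powersetCard.mpr ⟨(hCblocks T hT).2, (hCblocks T hT).1⟩
      obtain ⟨T₀, hT₀mem, hT₀⟩ := hT0
      have := hC3bal T hT3 T₀ hT₀mem
      omega
    · rw [Multiset.count_eq_zero_of_notMem hT]
      omega
  have hFcount : ∀ T, F.count T ≤ 1 := by
    intro T
    rw [hF]
    simp only [Multiset.count_add]
    have hA1 : A.count T ≤ 1 := Multiset.nodup_iff_count_le_one.mp hAsimple T
    have hB1 : B.count T ≤ 1 := Multiset.nodup_iff_count_le_one.mp hBsimple T
    rcases Decidable.em (T ∈ A) with hTA | hTA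
    · have h1 : B.count T = 0 := Multiset.count_eq_zero_of_notMem (fun h => Multiset.disjoint_left.mp hAB hTA h)
      have h2 : C.count T = 0 := Multiset.count_eq_zero_of_notMem (fun h => Multiset.disjoint_left.mp hAC hTA h)
      omega
    · have h0 : A.count T = 0 := Multiset.count_eq_zero_of_notMem hTA
      rcases Decidable.em (T ∈ B) with hTB | hTB
      · have h2 : C.count T = 0 := Multiset.count_eq_zero_of_notMem (fun h => Multiset.disjoint_left.mp hBC hTB h)
        omega
      · have h1 : B.count T = 0 := Multiset.count_eq_zero_of_notMem hTB
        have := hCcount T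
        omega
  have h3bal : ThreeBalancedOn Finset.univ F := by
    intro T₁ hT₁ T₂ hT₂
    have := hFcount T₁
    omega
  -- the block count
  have hsumF : ∑ p ∈ (Finset.univ : Finset (Fin v)).powersetCard 2, lamF F p =
      3 * Multiset.card F := sum_lamF _ _ hFblocks
  have hsumC : ∑ p ∈ U.powersetCard 2, lamF C p = 3 * c := by
    rw [sum_lamF U C hCblocks, hCcard]
  set P2 := (Finset.univ : Finset (Fin v)).powersetCard 2 with hP2
  set PU := U.powersetCard 2 with hPU
  have hPUsub : PU ⊆ P2 := by
    intro p hp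
    exact Finset.mem_powersetCard.mpr
      ⟨Finset.subset_univ _, (Finset.mem_powersetCard.mp hp).2⟩
  have hPGsub : SG ⊆ P2 \ PU := by
    intro q hq
    obtain ⟨i, rfl⟩ := hmemSG q hq
    rw [Finset.mem_sdiff]
    refine ⟨Finset.mem_powersetCard.mpr ⟨Finset.subset_univ _, hG2 i⟩, fun h => ?_⟩
    exact hGnotU i (Finset.mem_powersetCard.mp h).1
  have e1 : ∑ p ∈ P2, lamF F p = ∑ p ∈ P2 \ PU, lamF F p + ∑ p ∈ PU, lamF F p :=
    (Finset.sum_sdiff hPUsub).symm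
  have e2 : ∑ p ∈ P2 \ PU, lamF F p =
      ∑ p ∈ (P2 \ PU) \ SG, lamF F p + ∑ p ∈ SG, lamF F p :=
    (Finset.sum_sdiff hPGsub).symm
  have eU : ∑ p ∈ PU, lamF F p = 3 * c := by
    rw [← hsumC]
    apply Finset.sum_congr rfl
    intro p hp
    obtain ⟨hpU, h2⟩ := Finset.mem_powersetCard.mp hp
    exact hlamF_U p h2 hpU
  have eG : ∑ p ∈ SG, lamF F p = m * (l + 1) + n * (l - 1) := by
    rw [hSGdef, Finset.sum_image (fun i _ j _ h => hGinj h)]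
    rw [← Finset.sum_filter_add_sum_filter_not Finset.univ
      (fun i : Fin (m + n) => (i : ℕ) < m)]
    have g1 : ∑ i ∈ Finset.univ.filter (fun i : Fin (m + n) => (i : ℕ) < m),
        lamF F (G i) = m * (l + 1) := by
      rw [Finset.sum_congr rfl (fun i hi => ?_), Finset.sum_const, hfiltm, smul_eq_mul]
      rw [hlamF_G i, if_pos (Finset.mem_filter.mp hi).2]
      omega
    have g2 : ∑ i ∈ Finset.univ.filter (fun i : Fin (m + n) => ¬ (i : ℕ) < m),
        lamF F (G i) = n * (l - 1) := by
      rw [Finset.sum_congr rfl (fun i hi => ?_), Finset.sum_const, hfiltn, smul_eq_mul]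
      rw [hlamF_G i, if_neg (Finset.mem_filter.mp hi).2]
      omega
    rw [g1, g2]
  have eR : ∑ p ∈ (P2 \ PU) \ SG, lamF F p = ((P2 \ PU) \ SG).card * l := by
    rw [Finset.sum_congr rfl (fun p hp => ?_), Finset.sum_const, smul_eq_mul]
    rw [Finset.mem_sdiff, Finset.mem_sdiff] at hp
    obtain ⟨⟨hp2, hpnU⟩, hpnG⟩ := hp
    have h2 : p.card = 2 := (Finset.mem_powersetCard.mp hp2).2
    have hnU : ¬ p ⊆ U := fun h => hpnU (Finset.mem_powersetCard.mpr ⟨h, h2⟩)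
    have hnG : ∀ i, ¬ p ⊆ G i := by
      intro i hsub
      exact hpnG ((hpG_eq p i h2).mp hsub ▸ Finset.mem_image_of_mem G (Finset.mem_univ i))
    exact hlamF_cross p h2 hnU hnG
  have hcP2 : P2.card = v.choose 2 := by
    rw [hP2, Finset.card_powersetCard, Finset.card_univ, Fintype.card_fin]
  have hcPU : PU.card = u.choose 2 := by
    rw [hPU, Finset.card_powersetCard, hUcardu]
  have hcSG : SG.card = m + n := by
    rw [hSGdef, Finset.card_image_of_injective _ hGinj, Finset.card_univ, Fintype.card_fin]
  have hcR1 : (P2 \ PU).card + PU.card = P2.card := Finset.card_sdiff_add_card_eq_card hPUsub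
  have hcR2 : ((P2 \ PU) \ SG).card + SG.card = (P2 \ PU).card :=
    Finset.card_sdiff_add_card_eq_card hPGsub
  -- natural-number balance equation
  have hNat : 3 * Multiset.card F =
      ((P2 \ PU) \ SG).card * l + (m * (l + 1) + n * (l - 1)) + 3 * c := by
    rw [← hsumF, e1, e2, eU, eG, eR]
  -- integer versions
  have hchu : 2 * ((u.choose 2 : ℤ)) = (u : ℤ) * ((u : ℤ) - 1) := by
    have h := two_mul_choose_two u
    have h1 : (1 : ℕ) ≤ u := by omega
    zify [h1] at h
    linarith
  have hchv : 2 * ((v.choose 2 : ℤ)) = (v : ℤ) * ((v : ℤ) - 1) := by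
    have h := two_mul_choose_two v
    have h1 : (1 : ℕ) ≤ v := by omega
    zify [h1] at h
    linarith
  have h3c : 3 * (c : ℤ) = (l : ℤ) * (u.choose 2 : ℤ) + d := by
    have h6 := hassoc.1
    have h7 : 2 * (3 * (c : ℤ)) = 2 * ((l : ℤ) * (u.choose 2 : ℤ) + d) := by
      linear_combination h6 - (l : ℤ) * hchu
    linarith
  have hKZ : (((P2 \ PU) \ SG).card : ℤ) =
      (v.choose 2 : ℤ) - (u.choose 2 : ℤ) - (m + n) := by
    have := hcP2; have := hcPU; have := hcSG
    omega
  have hNatZ : 3 * (Multiset.card F : ℤ) =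
      (((P2 \ PU) \ SG).card : ℤ) * l + ((m : ℤ) * (l + 1) + (n : ℤ) * ((l : ℤ) - 1))
        + 3 * (c : ℤ) := by
    zify [hl1] at hNat
    linarith
  have hbeq : 3 * (Multiset.card F : ℤ) = (l : ℤ) * (v.choose 2 : ℤ) + m - n + d := by
    rw [hNatZ, hKZ, h3c]
    ring
  have hvz : (v : ℤ) = 2 * m + 2 * n + u := by
    rw [hv]; push_cast; ring
  have hdb : -(u : ℤ) < 2 * d ∧ 2 * d < u := hassoc.2
  -- associated pair of the big system
  have hassocV : AssocPair v (Multiset.card F) l ((m : ℤ) - n + d) := by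
    refine ⟨?_, by omega, by omega⟩
    linear_combination 2 * hbeq + (l : ℤ) * hchv
  have hC2v : CondC2 v (Multiset.card F) := by
    refine ⟨by omega, l, hlpos, hlodd, ?_, ?_⟩
    · linarith [hassocV.1, hassocV.2.1, hassocV.2.2]
    · linarith [hassocV.1, hassocV.2.1, hassocV.2.2]
  -- pair range
  have hrange : PairRangeOn Finset.univ F l := by
    intro p hp
    have h2 : p.card = 2 := (Finset.mem_powersetCard.mp hp).2
    by_cases hpU : p ⊆ U
    · rw [hlamF_U p h2 hpU]
      exact hCrange p (Finset.mem_powersetCard.mpr ⟨hpU, h2⟩)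
    · by_cases hpG : ∃ i, p ⊆ G i
      · obtain ⟨i, hi⟩ := hpG
        rw [(hpG_eq p i h2).mp hi, hlamF_G i]
        split_ifs <;> constructor <;> push_cast [Nat.cast_sub hl1] <;> omega
      · push_neg at hpG
        rw [hlamF_cross p h2 hpU hpG]
        constructor <;> omega
  -- shape
  have hshape : C2ShapeOn Finset.univ v F l ((m : ℤ) - n + d) := by
    rcases hCshape2 with ⟨hmod, hPMc, hq1, hq2⟩ |
      ⟨hmod, c₀, a₂, a₃, a₄, star, hc₀U, ha₂U, ha₃U, ha₄U,
        h12, h13, h14, h23, h24, h34, hstar, hstarsub, hPMc, hcounts⟩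
    · left
      refine ⟨by omega, ?_, by omega, by omega⟩
      have hun : Dlev Finset.univ F l 1 ∪ Dlev Finset.univ F l (-1) =
          (Dlev U C l 1 ∪ Dlev U C l (-1)) ∪ SG := by
        rw [hD1, hDm1, hSGsplit]
        ext q
        simp only [Finset.mem_union]
        tauto
      rw [hun]
      have := hmatch ∅ (Dlev U C l 1 ∪ Dlev U C l (-1)) (Finset.empty_subset _)
        (by rw [Finset.sdiff_empty]; exact hPMc)
      rwa [Finset.sdiff_empty] at this
    · right
      have hstarU : ∀ p ∈ star, p ⊆ U ∧ p.card = 2 := by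
        intro p hp
        rcases Finset.mem_union.mp (hstarsub hp) with h | h
        · exact hDCmem 1 p h
        · exact hDCmem (-1) p h
      have hSGnotstar : ∀ p ∈ SG, p ∉ star := by
        intro p hp hps
        obtain ⟨i, rfl⟩ := hmemSG p hp
        exact hGnotU i (hstarU _ hps).1
      have hint : ∀ j : ℤ, star ∩ Dlev Finset.univ F l j = star ∩ Dlev U C l j := by
        intro j
        ext q
        simp only [Finset.mem_inter]
        constructor
        · rintro ⟨hqs, hqD⟩
          exact ⟨hqs, (hDiff j q (hstarU q hqs).1 (hstarU q hqs).2).mp hqD⟩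
        · rintro ⟨hqs, hqD⟩
          exact ⟨hqs, (hDiff j q (hstarU q hqs).1 (hstarU q hqs).2).mpr hqD⟩
      have hD1s : Dlev Finset.univ F l 1 \ star = (Dlev U C l 1 \ star) ∪ SG1 := by
        rw [hD1]
        ext q
        simp only [Finset.mem_sdiff, Finset.mem_union]
        constructor
        · rintro ⟨h | h, hns⟩
          exacts [Or.inl ⟨h, hns⟩, Or.inr h]
        · rintro (⟨h, hns⟩ | h)
          · exact ⟨Or.inl h, hns⟩
          · exact ⟨Or.inr h, hSGnotstar q (by rw [hSGsplit]; exact Finset.mem_union_left _ h)⟩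
      have hDm1s : Dlev Finset.univ F l (-1) \ star = (Dlev U C l (-1) \ star) ∪ SG2 := by
        rw [hDm1]
        ext q
        simp only [Finset.mem_sdiff, Finset.mem_union]
        constructor
        · rintro ⟨h | h, hns⟩
          exacts [Or.inl ⟨h, hns⟩, Or.inr h]
        · rintro (⟨h, hns⟩ | h)
          · exact ⟨Or.inl h, hns⟩
          · exact ⟨Or.inr h, hSGnotstar q (by rw [hSGsplit]; exact Finset.mem_union_right _ h)⟩
      have hcard1 : (Dlev Finset.univ F l 1 \ star).card =
          (Dlev U C l 1 \ star).card + m := by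
        rw [hD1s, Finset.card_union_of_disjoint, hSG1card]
        exact hdisjDS _ _ (fun p hp => (hDCmem 1 p (Finset.mem_sdiff.mp hp).1).1)
          (fun p hp => by obtain ⟨i, -, hi⟩ := hmemSG1 p hp; exact ⟨i, hi⟩)
      have hcardm1 : (Dlev Finset.univ F l (-1) \ star).card =
          (Dlev U C l (-1) \ star).card + n := by
        rw [hDm1s, Finset.card_union_of_disjoint, hSG2card]
        exact hdisjDS _ _ (fun p hp => (hDCmem (-1) p (Finset.mem_sdiff.mp hp).1).1)
          (fun p hp => by obtain ⟨i, -, hi⟩ := hmemSG2 p hp; exact ⟨i, hi⟩)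
      have hS4U : ({c₀, a₂, a₃, a₄} : Finset (Fin v)) ⊆ U := by
        intro x hx
        simp only [Finset.mem_insert, Finset.mem_singleton] at hx
        rcases hx with rfl | rfl | rfl | rfl
        exacts [hc₀U, ha₂U, ha₃U, ha₄U]
      refine ⟨by omega, c₀, a₂, a₃, a₄, star, Finset.mem_univ _, Finset.mem_univ _,
        Finset.mem_univ _, Finset.mem_univ _, h12, h13, h14, h23, h24, h34, hstar, ?_, ?_, ?_⟩
      · intro p hp
        rcases Finset.mem_union.mp (hstarsub hp) with h | h
        · exact Finset.mem_union_left _ ((hDiff 1 p (hDCmem 1 p h).1 (hDCmem 1 p h).2).mpr h)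
        · exact Finset.mem_union_right _
            ((hDiff (-1) p (hDCmem (-1) p h).1 (hDCmem (-1) p h).2).mpr h)
      · have hset : (Dlev Finset.univ F l 1 ∪ Dlev Finset.univ F l (-1)) \ star =
            ((Dlev U C l 1 ∪ Dlev U C l (-1)) \ star) ∪ SG := by
          rw [hD1, hDm1, hSGsplit]
          ext q
          simp only [Finset.mem_sdiff, Finset.mem_union]
          constructor
          · rintro ⟨h, hns⟩
            rcases h with (h | h) | (h | h)
            · exact Or.inl ⟨Or.inl h, hns⟩
            · exact Or.inr (Or.inl h)
            · exact Or.inl ⟨Or.inr h, hns⟩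
            · exact Or.inr (Or.inr h)
          · rintro (⟨h | h, hns⟩ | h)
            · exact ⟨Or.inl (Or.inl h), hns⟩
            · exact ⟨Or.inr (Or.inl h), hns⟩
            · rcases h with h | h
              · exact ⟨Or.inl (Or.inr h),
                  hSGnotstar q (by rw [hSGsplit]; exact Finset.mem_union_left _ h)⟩
              · exact ⟨Or.inr (Or.inr h),
                  hSGnotstar q (by rw [hSGsplit]; exact Finset.mem_union_right _ h)⟩
        rw [hset]
        exact hmatch _ _ hS4U hPMc
      · rcases hcounts with ⟨q1, q2, q3, q4⟩ | ⟨q1, q2, q3, q4⟩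
        · left
          refine ⟨by rw [hint 1]; exact q1, by rw [hint (-1)]; exact q2, by omega, by omega⟩
        · right
          refine ⟨by rw [hint 1]; exact q1, by rw [hint (-1)]; exact q2, by omega, by omega⟩
  refine ⟨⟨⟨?_, rfl, hFblocks⟩, h3bal, l, (m : ℤ) - n + d, hlpos, hassocV, hrange,
    Or.inr ⟨hC2v, hshape⟩⟩, hbeq⟩
  simp





end DataPlacement
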